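/- Srivastava-Agarwal type generating function for the Hahn (Al-Salam-Carlitz) polynomials: ∑_{n=0}^∞ (λ;q)_n φ_n^{(α)}(x|q) t^n/(q;q)_n = ((λt;q)_∞/(t;q)_∞) · ∑_{n=0}^∞ ((λ;q)_n (α;q)_n / ((q;q)_n (λt;q)_n)) (xt)^n, valid for max{|t|, |xt|} < 1. -/

import Mathlib

noncomputable def qPoch (x q : ℂ) (n : ℕ) : ℂ := ∏ j ∈ Finset.range n, (1 - x * q ^ j)

noncomputable def qPochInf (x q : ℂ) : ℂ := ∏' j : ℕ, (1 - x * q ^ j)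

noncomputable def qBinom (q : ℂ) (n k : ℕ) : ℂ := qPoch q q n / (qPoch q q k * qPoch q q (n - k))

noncomputable def Dq (q : ℂ) (f : ℂ → ℂ) : ℂ → ℂ := fun a => (f a - f (q * a)) / ((1 - q) * a)

noncomputable def Dqinv (q : ℂ) (f : ℂ → ℂ) : ℂ → ℂ := fun a => (f (q⁻¹ * a) - f a) / ((q⁻¹ - 1) * a)

noncomputable def mPoch {m : ℕ} (a : Fin m → ℂ) (q : ℂ) (k : ℕ) : ℂ := ∏ i, qPoch (a i) q k

noncomputable def phi {r : ℕ} (a : Fin (r + 1) → ℂ) (b : Fin r → ℂ) (q x y : ℂ) (n : ℕ) : ℂ :=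
  ∑ k ∈ Finset.range (n + 1), qBinom q n k * (mPoch a q k / mPoch b q k) * x ^ k * y ^ (n - k)

noncomputable def psi {r : ℕ} (a : Fin (r + 1) → ℂ) (b : Fin r → ℂ) (q x y : ℂ) (n : ℕ) : ℂ :=
  ∑ k ∈ Finset.range (n + 1), qBinom q n k * (mPoch a q k / mPoch b q k) *
    q ^ ((((k + 1).choose 2 : ℕ) : ℤ) - (n : ℤ) * (k : ℤ)) * x ^ k * y ^ (n - k)

noncomputable def hahnPhi (α x q : ℂ) (n : ℕ) : ℂ :=
  ∑ k ∈ Finset.range (n + 1), qBinom q n k * qPoch α q k * x ^ k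


open Finset Filter Complex Topology

lemma qPoch_zero (a q : ℂ) : qPoch a q 0 = 1 := by simp [qPoch]

lemma qPoch_succ (a q : ℂ) (n : ℕ) : qPoch a q (n+1) = qPoch a q n * (1 - a * q ^ n) :=
  Finset.prod_range_succ _ n

lemma qPoch_add (a q : ℂ) (k m : ℕ) :
    qPoch a q (k+m) = qPoch a q k * qPoch (a * q^k) q m := by
  rw [qPoch, Finset.prod_range_add]
  congr 1
  refine Finset.prod_congr rfl fun j _ => ?_
  rw [pow_add]; ring

lemma one_sub_ne_zero {z : ℂ} (h : ‖z‖ < 1) : (1 : ℂ) - z ≠ 0 := by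
  intro h0
  rw [sub_eq_zero] at h0
  rw [← h0] at h
  simp at h

lemma qq_fac_ne {q : ℂ} (hq1 : ‖q‖ < 1) (j : ℕ) : (1 : ℂ) - q * q ^ j ≠ 0 := by
  apply one_sub_ne_zero
  rw [norm_mul, norm_pow]
  calc ‖q‖ * ‖q‖ ^ j ≤ ‖q‖ * 1 := by
        apply mul_le_mul_of_nonneg_left _ (norm_nonneg q)
        exact pow_le_one₀ (norm_nonneg q) hq1.le
    _ < 1 := by simpa using hq1

lemma qPoch_q_ne {q : ℂ} (hq1 : ‖q‖ < 1) (n : ℕ) : qPoch q q n ≠ 0 :=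
  Finset.prod_ne_zero_iff.2 fun j _ => qq_fac_ne hq1 j

lemma t_fac_ne {t q : ℂ} (hq1 : ‖q‖ < 1) (ht : ‖t‖ < 1) (j : ℕ) : (1 : ℂ) - t * q ^ j ≠ 0 := by
  apply one_sub_ne_zero
  rw [norm_mul, norm_pow]
  calc ‖t‖ * ‖q‖ ^ j ≤ ‖t‖ * 1 :=
        mul_le_mul_of_nonneg_left (pow_le_one₀ (norm_nonneg q) hq1.le) (norm_nonneg t)
    _ < 1 := by simpa using ht

lemma summable_log_qPoch (c : ℂ) {q : ℂ} (hq1 : ‖q‖ < 1) :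
    Summable (fun j : ℕ => Complex.log (1 - c * q ^ j)) := by
  have hg : Summable (fun j : ℕ => (3/2 : ℝ) * (‖c‖ * ‖q‖ ^ j)) :=
    ((summable_geometric_of_lt_one (norm_nonneg q) hq1).mul_left _).mul_left _
  apply Summable.of_norm_bounded_eventually_nat hg
  have : Tendsto (fun j : ℕ => ‖c‖ * ‖q‖ ^ j) atTop (𝓝 (‖c‖ * 0)) :=
    (tendsto_pow_atTop_nhds_zero_of_lt_one (norm_nonneg q) hq1).const_mul _
  rw [mul_zero] at this
  filter_upwards [this.eventually_le_const (by norm_num : (0:ℝ) < 1/2)] with j hj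
  have hz : ‖-(c * q ^ j)‖ ≤ 1/2 := by
    rw [norm_neg, norm_mul, norm_pow]; exact hj
  have := Complex.norm_log_one_add_half_le_self hz
  rw [show (1 : ℂ) + -(c * q ^ j) = 1 - c * q ^ j by ring] at this
  refine this.trans ?_
  rw [norm_neg, norm_mul, norm_pow]

lemma hasProd_qPochInf (c : ℂ) {q : ℂ} (hq1 : ‖q‖ < 1) (h : ∀ j, (1:ℂ) - c * q ^ j ≠ 0) :
    HasProd (fun j : ℕ => 1 - c * q ^ j) (qPochInf c q) := by
  have := Complex.multipliable_of_summable_log (summable_log_qPoch c hq1)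
  exact this.hasProd

lemma qPochInf_ne_zero (c : ℂ) {q : ℂ} (hq1 : ‖q‖ < 1) (h : ∀ j, (1:ℂ) - c * q ^ j ≠ 0) :
    qPochInf c q ≠ 0 := by
  have h2 := Complex.cexp_tsum_eq_tprod (f := fun j => (1:ℂ) - c * q ^ j) h
    (summable_log_qPoch c hq1)
  rw [qPochInf, ← h2]
  exact Complex.exp_ne_zero _

lemma tendsto_qPoch (c : ℂ) {q : ℂ} (hq1 : ‖q‖ < 1) (h : ∀ j, (1:ℂ) - c * q ^ j ≠ 0) :
    Tendsto (fun N => qPoch c q N) atTop (𝓝 (qPochInf c q)) :=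
  (hasProd_qPochInf c hq1 h).tendsto_prod_nat

lemma qPochInf_split (c : ℂ) {q : ℂ} (hq1 : ‖q‖ < 1) (h : ∀ j, (1:ℂ) - c * q ^ j ≠ 0) (k : ℕ) :
    qPochInf c q = qPoch c q k * qPochInf (c * q ^ k) q := by
  have h2 : ∀ j, (1:ℂ) - (c * q ^ k) * q ^ j ≠ 0 := fun j => by
    have := h (k + j); rwa [pow_add, ← mul_assoc] at this
  have hp := hasProd_qPochInf (c * q ^ k) hq1 h2
  have hshift : HasProd (fun j : ℕ => 1 - c * q ^ (j + k)) (qPochInf (c * q ^ k) q) := by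
    have he : (fun j : ℕ => (1:ℂ) - c * q ^ (j + k)) = fun j : ℕ => 1 - (c * q ^ k) * q ^ j := by
      funext j; rw [add_comm, pow_add]; ring
    rw [he]; exact hp
  have key := Multipliable.prod_mul_tprod_nat_mul' (f := fun j : ℕ => 1 - c * q ^ j) (k := k)
    hshift.multipliable
  rw [qPochInf, ← key, qPoch, hshift.tprod_eq]

lemma norm_qPoch_le (a : ℂ) {q : ℂ} (hq1 : ‖q‖ < 1) (n : ℕ) :
    ‖qPoch a q n‖ ≤ Real.exp (‖a‖ * (1 - ‖q‖)⁻¹) := by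
  calc ‖qPoch a q n‖
      ≤ ∏ j ∈ Finset.range n, ‖(1:ℂ) - a * q ^ j‖ := norm_prod_le _ _
    _ ≤ ∏ j ∈ Finset.range n, Real.exp (‖a‖ * ‖q‖ ^ j) := by
        apply Finset.prod_le_prod (fun j _ => norm_nonneg _)
        intro j _
        calc ‖(1:ℂ) - a * q ^ j‖ ≤ ‖(1:ℂ)‖ + ‖a * q ^ j‖ := norm_sub_le _ _
          _ = 1 + ‖a‖ * ‖q‖ ^ j := by rw [norm_one, norm_mul, norm_pow]
          _ ≤ Real.exp (‖a‖ * ‖q‖ ^ j) := by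
              have := Real.add_one_le_exp (‖a‖ * ‖q‖ ^ j)
              linarith
    _ = Real.exp (∑ j ∈ Finset.range n, ‖a‖ * ‖q‖ ^ j) := by rw [Real.exp_sum]
    _ ≤ Real.exp (‖a‖ * (1 - ‖q‖)⁻¹) := by
        apply Real.exp_le_exp.2
        rw [← Finset.mul_sum]
        apply mul_le_mul_of_nonneg_left _ (norm_nonneg a)
        have := Summable.sum_le_tsum (Finset.range n)
          (fun i _ => pow_nonneg (norm_nonneg q) i)
          (summable_geometric_of_lt_one (norm_nonneg q) hq1)
        rwa [tsum_geometric_of_lt_one (norm_nonneg q) hq1] at this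

lemma exists_qPoch_q_lb {q : ℂ} (hq1 : ‖q‖ < 1) :
    ∃ δ : ℝ, 0 < δ ∧ ∀ n, δ ≤ ‖qPoch q q n‖ := by
  have hL : qPochInf q q ≠ 0 := qPochInf_ne_zero q hq1 (qq_fac_ne hq1)
  have hLpos : 0 < ‖qPochInf q q‖ / 2 := by
    have := norm_pos_iff.2 hL; linarith
  have htd : Tendsto (fun N => ‖qPoch q q N‖) atTop (𝓝 ‖qPochInf q q‖) :=
    (tendsto_qPoch q hq1 (qq_fac_ne hq1)).norm
  have hev : ∀ᶠ N in atTop, ‖qPochInf q q‖ / 2 ≤ ‖qPoch q q N‖ :=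
    htd.eventually_const_le (by linarith [norm_pos_iff.2 hL])
  obtain ⟨N, hN⟩ := eventually_atTop.1 hev
  classical
  set s : Finset ℝ :=
    insert (‖qPochInf q q‖ / 2) ((Finset.range N).image fun n => ‖qPoch q q n‖) with hsdef
  have hs : s.Nonempty := ⟨_, Finset.mem_insert_self _ _⟩
  refine ⟨s.min' hs, ?_, ?_⟩
  · have hmem := s.min'_mem hs
    rcases Finset.mem_insert.1 hmem with h | h
    · rw [h]; exact hLpos
    · obtain ⟨n, _, hn⟩ := Finset.mem_image.1 h
      rw [← hn]; exact norm_pos_iff.2 (qPoch_q_ne hq1 n)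
  · intro n
    rcases lt_or_ge n N with hn | hn
    · exact Finset.min'_le s _
        (Finset.mem_insert.2 (Or.inr (Finset.mem_image_of_mem _ (Finset.mem_range.2 hn))))
    · exact le_trans (Finset.min'_le s _ (Finset.mem_insert_self _ _)) (hN n hn)

noncomputable def G (a q s : ℂ) : ℂ := ∑' n : ℕ, qPoch a q n / qPoch q q n * s ^ n

lemma summable_G (a s : ℂ) {q : ℂ} (hq1 : ‖q‖ < 1) (hs : ‖s‖ < 1) :
    Summable (fun n : ℕ => qPoch a q n / qPoch q q n * s ^ n) := by
  obtain ⟨δ, hδ, hδle⟩ := exists_qPoch_q_lb hq1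
  apply Summable.of_norm_bounded
    (g := fun n => Real.exp (‖a‖ * (1 - ‖q‖)⁻¹) / δ * ‖s‖ ^ n)
    (((summable_geometric_of_lt_one (norm_nonneg s) hs)).mul_left _)
  intro n
  rw [norm_mul, norm_div, norm_pow]
  have h1 : ‖qPoch a q n‖ / ‖qPoch q q n‖ ≤ Real.exp (‖a‖ * (1 - ‖q‖)⁻¹) / δ :=
    div_le_div₀ (Real.exp_pos _).le (norm_qPoch_le a hq1 n) hδ (hδle n)
  exact mul_le_mul_of_nonneg_right h1 (pow_nonneg (norm_nonneg s) n)

lemma G_funct (a s : ℂ) {q : ℂ} (hq1 : ‖q‖ < 1) (hs : ‖s‖ < 1) :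
    (1 - s) * G a q s = (1 - a * s) * G a q (q * s) := by
  have hqs : ‖q * s‖ < 1 := by
    rw [norm_mul]
    exact lt_of_le_of_lt (mul_le_of_le_one_right (norm_nonneg q) hs.le) hq1
  set c : ℕ → ℂ := fun n => qPoch a q n / qPoch q q n with hc
  have S1 : Summable (fun n => c n * s ^ n) := summable_G a s hq1 hs
  have S2 : Summable (fun n => c n * (q * s) ^ n) := summable_G a (q*s) hq1 hqs
  have key : (∑' n, c n * s ^ n) - (∑' n, c n * (q * s) ^ n)
      = s * (∑' n, c n * s ^ n) - a * s * (∑' n, c n * (q * s) ^ n) := by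
    rw [← Summable.tsum_sub S1 S2, ← tsum_mul_left (a := s), ← tsum_mul_left (a := a * s),
      ← Summable.tsum_sub (S1.mul_left s) (S2.mul_left (a * s)),
      Summable.tsum_eq_zero_add (S1.sub S2)]
    have h0 : c 0 * s ^ 0 - c 0 * (q * s) ^ 0 = 0 := by simp
    rw [h0, zero_add]
    apply tsum_congr
    intro n
    have hrec : c (n+1) * (1 - q ^ (n+1)) = c n * (1 - a * q ^ n) := by
      rw [hc]
      simp only
      rw [qPoch_succ a, qPoch_succ q, pow_succ']
      have h1 : qPoch q q n ≠ 0 := qPoch_q_ne hq1 n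
      have h2 : (1:ℂ) - q * q ^ n ≠ 0 := qq_fac_ne hq1 n
      rw [← div_div, div_mul_cancel₀ _ h2]
      ring
    linear_combination s ^ (n+1) * hrec
  have hG1 : G a q s = ∑' n, c n * s ^ n := rfl
  have hG2 : G a q (q * s) = ∑' n, c n * (q * s) ^ n := rfl
  rw [hG1, hG2]
  linear_combination key

lemma tendsto_G_zero (a t : ℂ) {q : ℂ} (hq1 : ‖q‖ < 1) (ht : ‖t‖ < 1) :
    Tendsto (fun N : ℕ => G a q (q ^ N * t)) atTop (𝓝 1) := by
  obtain ⟨δ, hδ, hδle⟩ := exists_qPoch_q_lb hq1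
  set C := Real.exp (‖a‖ * (1 - ‖q‖)⁻¹) with hC
  have hC0 : 0 < C := Real.exp_pos _
  set K := C / δ * (1 - ‖t‖)⁻¹ * ‖t‖ with hK
  rw [← tendsto_sub_nhds_zero_iff]
  apply squeeze_zero_norm (a := fun N : ℕ => K * ‖q‖ ^ N)
  · intro N
    set s : ℂ := q ^ N * t with hsdef
    have hsle : ‖s‖ ≤ ‖t‖ := by
      rw [hsdef, norm_mul, norm_pow]
      exact mul_le_of_le_one_left (norm_nonneg t) (pow_le_one₀ (norm_nonneg q) hq1.le)
    have hs1 : ‖s‖ < 1 := lt_of_le_of_lt hsle ht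
    have hsum : Summable (fun n : ℕ => qPoch a q n / qPoch q q n * s ^ n) :=
      summable_G a s hq1 hs1
    have h0 : qPoch a q 0 / qPoch q q 0 * s ^ 0 = 1 := by simp [qPoch_zero]
    have hG : G a q s - 1 = ∑' n : ℕ, qPoch a q (n+1) / qPoch q q (n+1) * s ^ (n+1) := by
      rw [G, Summable.tsum_eq_zero_add hsum, h0]
      ring
    rw [hG]
    have hgeom : HasSum (fun n : ℕ => C / δ * ‖s‖ * ‖s‖ ^ n)
        (C / δ * ‖s‖ * (1 - ‖s‖)⁻¹) :=
      (hasSum_geometric_of_lt_one (norm_nonneg s) hs1).mul_left _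
    have hbound := tsum_of_norm_bounded hgeom (f := fun n : ℕ =>
        qPoch a q (n+1) / qPoch q q (n+1) * s ^ (n+1)) ?_
    · refine hbound.trans ?_
      have hs_eq : ‖s‖ = ‖q‖ ^ N * ‖t‖ := by rw [hsdef, norm_mul, norm_pow]
      have h1 : (1 - ‖s‖)⁻¹ ≤ (1 - ‖t‖)⁻¹ := by
        apply inv_anti₀ (by linarith) (by linarith)
      calc C / δ * ‖s‖ * (1 - ‖s‖)⁻¹ ≤ C / δ * ‖s‖ * (1 - ‖t‖)⁻¹ := by
            apply mul_le_mul_of_nonneg_left h1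
            positivity
        _ = K * ‖q‖ ^ N := by rw [hs_eq, hK]; ring
    · intro n
      rw [norm_mul, norm_div, norm_pow]
      have h1 : ‖qPoch a q (n+1)‖ / ‖qPoch q q (n+1)‖ ≤ C / δ :=
        div_le_div₀ hC0.le (norm_qPoch_le a hq1 (n+1)) hδ (hδle (n+1))
      calc ‖qPoch a q (n+1)‖ / ‖qPoch q q (n+1)‖ * ‖s‖ ^ (n+1)
          ≤ C / δ * ‖s‖ ^ (n+1) :=
            mul_le_mul_of_nonneg_right h1 (pow_nonneg (norm_nonneg s) _)
        _ = C / δ * ‖s‖ * ‖s‖ ^ n := by ring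
  · have := (tendsto_pow_atTop_nhds_zero_of_lt_one (norm_nonneg q) hq1).const_mul K
    simpa using this

lemma qbinom_prod (a t : ℂ) {q : ℂ} (hq1 : ‖q‖ < 1) (ht : ‖t‖ < 1)
    (hat : ∀ j, (1:ℂ) - a * t * q ^ j ≠ 0) :
    qPochInf t q * G a q t = qPochInf (a * t) q := by
  have hiter : ∀ N, qPoch t q N * G a q t = qPoch (a*t) q N * G a q (q ^ N * t) := by
    intro N
    induction N with
    | zero => simp [qPoch_zero]
    | succ N ih =>
        have hsN : ‖q ^ N * t‖ < 1 := by
          rw [norm_mul, norm_pow]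
          exact lt_of_le_of_lt
            (mul_le_of_le_one_left (norm_nonneg t) (pow_le_one₀ (norm_nonneg q) hq1.le)) ht
        have fe := G_funct a (q ^ N * t) hq1 hsN
        have hqq : q * (q ^ N * t) = q ^ (N+1) * t := by ring
        rw [hqq] at fe
        rw [qPoch_succ t, qPoch_succ (a*t)]
        calc qPoch t q N * (1 - t * q ^ N) * G a q t
            = (1 - t * q ^ N) * (qPoch t q N * G a q t) := by ring
          _ = (1 - t * q ^ N) * (qPoch (a*t) q N * G a q (q ^ N * t)) := by rw [ih]
          _ = qPoch (a*t) q N * ((1 - q ^ N * t) * G a q (q ^ N * t)) := by ring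
          _ = qPoch (a*t) q N * ((1 - a * (q ^ N * t)) * G a q (q ^ (N+1) * t)) := by rw [fe]
          _ = qPoch (a*t) q N * (1 - a * t * q ^ N) * G a q (q ^ (N+1) * t) := by ring
  have h1 : Tendsto (fun N => qPoch t q N * G a q t) atTop (𝓝 (qPochInf t q * G a q t)) :=
    (tendsto_qPoch t hq1 (t_fac_ne hq1 ht)).mul_const _
  have h2 : Tendsto (fun N => qPoch (a*t) q N * G a q (q ^ N * t)) atTop
      (𝓝 (qPochInf (a*t) q * 1)) :=
    (tendsto_qPoch (a*t) hq1 hat).mul (tendsto_G_zero a t hq1 ht)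
  have h2' : Tendsto (fun N => qPoch t q N * G a q t) atTop (𝓝 (qPochInf (a*t) q * 1)) :=
    h2.congr fun N => (hiter N).symm
  have := tendsto_nhds_unique h1 h2'
  rwa [mul_one] at this

lemma tsum_prod_antidiagonal {F : ℕ × ℕ → ℂ} (h : Summable F) :
    ∑' p : ℕ × ℕ, F p = ∑' n : ℕ, ∑ kl ∈ Finset.HasAntidiagonal.antidiagonal n, F kl := by
  conv_rhs => congr; ext n; rw [← Finset.sum_finset_coe, ← tsum_fintype (L := SummationFilter.unconditional _)]
  rw [← Finset.HasAntidiagonal.sigmaAntidiagonalEquivProd.tsum_eq F]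
  exact Summable.tsum_sigma' (fun n => (hasSum_fintype _).summable)
    (Finset.HasAntidiagonal.sigmaAntidiagonalEquivProd.summable_iff.2 h)

noncomputable def Fdbl (l a x t q : ℂ) : ℕ × ℕ → ℂ := fun p =>
  qPoch l q (p.1 + p.2) * qPoch a q p.1 * x ^ p.1 * t ^ (p.1 + p.2) /
    (qPoch q q p.1 * qPoch q q p.2)

lemma summable_Fdbl (l a x t : ℂ) {q : ℂ} (hq1 : ‖q‖ < 1) (ht : ‖t‖ < 1)
    (hxt : ‖x * t‖ < 1) : Summable (Fdbl l a x t q) := by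
  obtain ⟨δ, hδ, hδle⟩ := exists_qPoch_q_lb hq1
  set Cl := Real.exp (‖l‖ * (1 - ‖q‖)⁻¹) with hCl
  set Ca := Real.exp (‖a‖ * (1 - ‖q‖)⁻¹) with hCa
  have hCl0 : 0 < Cl := Real.exp_pos _
  have hCa0 : 0 < Ca := Real.exp_pos _
  have hgeo : Summable (fun p : ℕ × ℕ => ‖x * t‖ ^ p.1 * ‖t‖ ^ p.2) :=
    (summable_geometric_of_lt_one (norm_nonneg _) hxt).mul_of_nonneg
      (summable_geometric_of_lt_one (norm_nonneg _) ht)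
      (fun k => pow_nonneg (norm_nonneg _) _) (fun m => pow_nonneg (norm_nonneg _) _)
  apply Summable.of_norm_bounded
    (g := fun p : ℕ × ℕ => Cl * Ca / (δ * δ) * (‖x * t‖ ^ p.1 * ‖t‖ ^ p.2)) (hgeo.mul_left _)
  rintro ⟨k, m⟩
  have hnum : ‖qPoch l q (k + m) * qPoch a q k * x ^ k * t ^ (k + m)‖
      ≤ Cl * Ca * ‖x‖ ^ k * ‖t‖ ^ (k + m) := by
    rw [norm_mul, norm_mul, norm_mul, norm_pow, norm_pow]
    gcongr
    · exact norm_qPoch_le l hq1 (k + m)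
    · exact norm_qPoch_le a hq1 k
  have hden : δ * δ ≤ ‖qPoch q q k * qPoch q q m‖ := by
    rw [norm_mul]
    exact mul_le_mul (hδle k) (hδle m) hδ.le (le_trans hδ.le (hδle k))
  have h1 : ‖Fdbl l a x t q (k, m)‖
      ≤ (Cl * Ca * ‖x‖ ^ k * ‖t‖ ^ (k + m)) / (δ * δ) := by
    rw [Fdbl, norm_div]
    exact div_le_div₀ (by positivity) hnum (by positivity) hden
  refine h1.trans (le_of_eq ?_)
  rw [norm_mul, mul_pow, pow_add]
  field_simp


/-- Srivastava-Agarwal type generating function for the Hahn polynomials. -/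
theorem stmt19 (q l α x t : ℂ) (hq0 : q ≠ 0) (hq1 : ‖q‖ < 1)
    (ht : ‖t‖ < 1) (hxt : ‖x * t‖ < 1)
    (hlt : ∀ n : ℕ, qPoch (l * t) q n ≠ 0) :
    ∑' n : ℕ, qPoch l q n * hahnPhi α x q n * t ^ n / qPoch q q n
      = (qPochInf (l * t) q / qPochInf t q)
          * ∑' n : ℕ,
              (qPoch l q n * qPoch α q n / (qPoch q q n * qPoch (l * t) q n))
                * (x * t) ^ n := by
  have hq1' : ‖q‖ < 1 := hq1
  have ht' : ‖t‖ < 1 := ht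
  have hxt' : ‖x * t‖ < 1 := hxt
  have hfac : ∀ i, (1:ℂ) - l * t * q ^ i ≠ 0 := by
    intro i
    have h := hlt (i+1)
    rw [qPoch_succ] at h
    exact (mul_ne_zero_iff.1 h).2
  have hInfT : qPochInf t q ≠ 0 := qPochInf_ne_zero t hq1' (t_fac_ne hq1' ht')
  set F := Fdbl l α x t q with hF
  have hsumF : Summable F := summable_Fdbl l α x t hq1' ht' hxt'
  have step1 : ∀ n, qPoch l q n * hahnPhi α x q n * t ^ n / qPoch q q n
      = ∑ kl ∈ Finset.HasAntidiagonal.antidiagonal n, F kl := by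
    intro n
    rw [Finset.Nat.sum_antidiagonal_eq_sum_range_succ_mk]
    rw [hahnPhi, Finset.mul_sum, Finset.sum_mul, Finset.sum_div]
    apply Finset.sum_congr rfl
    intro k hk
    have hkn : k ≤ n := Nat.lt_succ_iff.1 (Finset.mem_range.1 hk)
    rw [hF, Fdbl]
    simp only
    rw [Nat.add_sub_cancel' hkn, qBinom]
    have h1 : qPoch q q n ≠ 0 := qPoch_q_ne hq1' n
    have h2 : qPoch q q k ≠ 0 := qPoch_q_ne hq1' k
    have h3 : qPoch q q (n-k) ≠ 0 := qPoch_q_ne hq1' (n-k)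
    field_simp
  have e1 : ∑' n : ℕ, qPoch l q n * hahnPhi α x q n * t ^ n / qPoch q q n
      = ∑' p : ℕ × ℕ, F p := by
    rw [tsum_prod_antidiagonal hsumF]
    exact tsum_congr step1
  rw [e1, Summable.tsum_prod' hsumF hsumF.prod_factor]
  have hinner : ∀ k, ∑' m, F (k, m) = (qPochInf (l*t) q / qPochInf t q) *
      (qPoch l q k * qPoch α q k / (qPoch q q k * qPoch (l*t) q k) * (x*t) ^ k) := by
    intro k
    have hat' : ∀ j, (1:ℂ) - (l * q ^ k) * t * q ^ j ≠ 0 := by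
      intro j
      have h := hfac (k+j)
      rw [pow_add, show l * t * (q ^ k * q ^ j) = (l * q ^ k) * t * q ^ j by ring] at h
      exact h
    have hGk := qbinom_prod (l * q ^ k) t hq1' ht' hat'
    rw [show (l * q ^ k) * t = (l * t) * q ^ k by ring] at hGk
    have hsplit := qPochInf_split (l*t) hq1' hfac k
    have hPk : qPoch (l*t) q k ≠ 0 := hlt k
    have hGval : G (l * q ^ k) q t = qPochInf (l*t) q / (qPoch (l*t) q k * qPochInf t q) := by
      rw [hsplit]
      field_simp
      have e : qPochInf (l * q ^ k * t) q = qPochInf (l * t * q ^ k) q := by congr 1; ring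
      linear_combination hGk - e
    have e2 : ∑' m, F (k, m)
        = (qPoch l q k * qPoch α q k * x ^ k * t ^ k / qPoch q q k) * G (l * q ^ k) q t := by
      rw [G, ← tsum_mul_left]
      apply tsum_congr
      intro m
      rw [hF, Fdbl]
      simp only
      rw [qPoch_add l q k m, pow_add t k m]
      have h2 : qPoch q q k ≠ 0 := qPoch_q_ne hq1' k
      have h3 : qPoch q q m ≠ 0 := qPoch_q_ne hq1' m
      field_simp
    rw [e2, hGval]
    have h2 : qPoch q q k ≠ 0 := qPoch_q_ne hq1' k
    field_simp
    ring
  rw [tsum_congr hinner, tsum_mul_left]
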